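/- Let m = 2k. The number of matrices A ∈ GL(m, 𝔽₂) with A·Aᵗ = I is 2^{k²}·∏_{i=1}^{k-1}(2^{2i} - 1). -/

import Mathlib

open Matrix Finset
abbrev F2 := ZMod 2

lemma f2_mul_self (x : F2) : x * x = x := by revert x; decide
lemma f2_add_self (x : F2) : x + x = 0 := by revert x; decide
lemma f2_eq_zero_of_ne_one {x : F2} (h : x ≠ 1) : x = 0 := by revert h; revert x; decide

lemma dot_self {m : ℕ} (x : Fin m → F2) : x ⬝ᵥ x = ∑ i, x i := by
  simp [dotProduct, f2_mul_self]

def T {m : ℕ} (u : Fin m → F2) : Matrix (Fin m) (Fin m) F2 := 1 + vecMulVec u u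

lemma T_transpose {m : ℕ} (u : Fin m → F2) : (T u)ᵀ = T u := by
  ext i j
  simp only [T, transpose_apply, Matrix.add_apply, vecMulVec_apply, Matrix.one_apply, mul_comm]
  rcases eq_or_ne i j with h | h
  · simp [h]
  · simp [h, Ne.symm h]

lemma T_mul_T {m : ℕ} (u : Fin m → F2) (hu : u ⬝ᵥ u = 0) : T u * T u = 1 := by
  ext i j
  rw [Matrix.mul_apply]
  simp only [T, Matrix.add_apply, vecMulVec_apply, Matrix.one_apply, add_mul, mul_add,
    Finset.sum_add_distrib]
  have h4 : ∑ x, u i * u x * (u x * u j) = (u ⬝ᵥ u) * (u i * u j) := by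
    rw [dotProduct, Finset.sum_mul]
    exact Finset.sum_congr rfl (fun x _ => by ring)
  rw [h4, hu, zero_mul]
  simp only [mul_ite, ite_mul, one_mul, mul_one, zero_mul, mul_zero,
    Finset.sum_ite_eq, Finset.sum_ite_eq', Finset.mem_univ, if_true]
  rw [add_zero, add_assoc, f2_add_self, add_zero]

lemma T_orth {m : ℕ} (u : Fin m → F2) (hu : u ⬝ᵥ u = 0) : T u * (T u)ᵀ = 1 := by
  rw [T_transpose]; exact T_mul_T u hu

lemma T_mulVec {m : ℕ} (u x : Fin m → F2) : (T u).mulVec x = x + (u ⬝ᵥ x) • u := by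
  ext i
  simp [T, mulVec, dotProduct, Matrix.add_apply, vecMulVec_apply, Matrix.one_apply,
    add_mul, Finset.sum_add_distrib, ite_mul, Finset.mul_sum, mul_assoc]
  rw [Finset.sum_mul]
  exact Finset.sum_congr rfl (fun x _ => by ring)

lemma dot_add_add {m : ℕ} (a b c d : Fin m → F2) :
    (a + b) ⬝ᵥ (c + d) = a ⬝ᵥ c + a ⬝ᵥ d + b ⬝ᵥ c + b ⬝ᵥ d := by
  simp [dotProduct_add, add_dotProduct]; ring

lemma orth_mul {m : ℕ} {A B : Matrix (Fin m) (Fin m) F2} (hA : A * Aᵀ = 1) (hB : B * Bᵀ = 1) :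
    (A * B) * (A * B)ᵀ = 1 := by
  rw [transpose_mul, Matrix.mul_assoc, ← Matrix.mul_assoc B, hB, Matrix.one_mul, hA]

lemma add_add_self {m : ℕ} (a b : Fin m → F2) : a + (b + a) = b := by
  ext i
  rw [Pi.add_apply, Pi.add_apply, add_comm (a i), add_assoc, f2_add_self, add_zero]

/-- the key construction: any norm-1 vector other than the all-ones vector
(or equal to e₁) is the image of e₁ under some orthogonal matrix. -/
lemma exists_orth_mulVec {m : ℕ} (v : Fin (m+1) → F2) (hv : v ⬝ᵥ v = 1)
    (hve : v ≠ (fun _ => 1) ∨ v = Pi.single 0 1) :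
    ∃ M : Matrix (Fin (m+1)) (Fin (m+1)) F2, M * Mᵀ = 1 ∧ M.mulVec (Pi.single 0 1) = v := by
  set e1 : Fin (m+1) → F2 := Pi.single 0 1 with he1
  have he1self : e1 ⬝ᵥ e1 = 1 := by simp [he1]
  rcases eq_or_ne v e1 with rfl | hne1
  · exact ⟨1, by simp, by simp [Matrix.one_mulVec]⟩
  rcases eq_or_ne (v 0) 0 with h0 | h0
  · -- single transvection
    have hdot : v ⬝ᵥ e1 = v 0 := by simp [he1]
    have hdot' : e1 ⬝ᵥ v = v 0 := by simp [he1]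
    have hu : (v + e1) ⬝ᵥ (v + e1) = 0 := by
      rw [dot_add_add, hv, hdot, hdot', he1self, h0]; decide
    refine ⟨T (v + e1), T_orth _ hu, ?_⟩
    rw [T_mulVec]
    have : (v + e1) ⬝ᵥ e1 = 1 := by rw [add_dotProduct, hdot, he1self, h0, zero_add]
    rw [this, one_smul, add_add_self]
  · -- v 0 = 1, v ≠ e1, so v ≠ all-ones gives an l with v l = 0
    have h01 : v 0 = 1 := by
      rcases (show v 0 = 0 ∨ v 0 = 1 by revert h0; generalize v 0 = x; revert x; decide) with h | h
      · exact absurd h h0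
      · exact h
    have hvne : v ≠ (fun _ => 1) := by
      rcases hve with h | h
      · exact h
      · exact absurd h hne1
    obtain ⟨l, hl⟩ : ∃ l, v l = 0 := by
      by_contra hc
      push_neg at hc
      refine absurd (funext fun i => ?_) hvne
      have := hc i; revert this; generalize v i = x; revert x; decide
    have hl0 : l ≠ 0 := by intro h; rw [h, h01] at hl; exact one_ne_zero hl
    set el : Fin (m+1) → F2 := Pi.single l 1 with hel
    have helself : el ⬝ᵥ el = 1 := by simp [hel]
    have hel0 : el 0 = 0 := by simp [hel, Pi.single_apply, hl0]
    have he1l : e1 l = 0 := by simp [he1, Pi.single_apply, Ne.symm hl0]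
    have hdvel : v ⬝ᵥ el = 0 := by simp [hel, hl]
    have hdelv : el ⬝ᵥ v = 0 := by simp [hel, hl]
    have hdele1 : el ⬝ᵥ e1 = 0 := by simp [hel, he1, Pi.single_apply, hl0]
    have hde1el : e1 ⬝ᵥ el = 0 := by simp [hel, he1, Pi.single_apply, Ne.symm hl0]
    have hu1 : (v + el) ⬝ᵥ (v + el) = 0 := by
      rw [dot_add_add, hv, hdvel, hdelv, helself]; decide
    have hu2 : (el + e1) ⬝ᵥ (el + e1) = 0 := by
      rw [dot_add_add, helself, hdele1, hde1el, he1self]; decide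
    refine ⟨T (v + el) * T (el + e1), orth_mul (T_orth _ hu1) (T_orth _ hu2), ?_⟩
    have h1 : (el + e1) ⬝ᵥ e1 = 1 := by rw [add_dotProduct, hdele1, he1self, zero_add]
    have h2 : (v + el) ⬝ᵥ el = 1 := by rw [add_dotProduct, hdvel, helself, zero_add]
    have hinner : T (el + e1) *ᵥ e1 = el := by rw [T_mulVec, h1, one_smul, add_add_self]
    rw [← Matrix.mulVec_mulVec, hinner, T_mulVec, h2, one_smul, add_add_self]


lemma rowdot {n : ℕ} (A B : Matrix (Fin n) (Fin n) F2) (i j : Fin n) :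
    (A * Bᵀ) i j = A i ⬝ᵥ B j := by
  simp [Matrix.mul_apply, dotProduct, transpose_apply]

lemma cons_dot_cons {n : ℕ} (x y : F2) (u w : Fin n → F2) :
    Fin.cons x u ⬝ᵥ Fin.cons y w = x * y + u ⬝ᵥ w :=
  Matrix.cons_dotProduct_cons x u y w

lemma e1_eq_cons {n : ℕ} : (Pi.single 0 1 : Fin (n+1) → F2) = Fin.cons 1 0 := by
  ext i
  refine Fin.cases ?_ (fun i' => ?_) i
  · simp
  · simp [Pi.single_eq_of_ne (Fin.succ_ne_zero i')]

def extM {n : ℕ} (B : Matrix (Fin n) (Fin n) F2) : Matrix (Fin (n+1)) (Fin (n+1)) F2 :=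
  Matrix.of (Fin.cons (Fin.cons 1 0) (fun i => Fin.cons 0 (B i)))

lemma extM_zero {n : ℕ} (B : Matrix (Fin n) (Fin n) F2) : extM B 0 = Fin.cons 1 0 := rfl
lemma extM_succ {n : ℕ} (B : Matrix (Fin n) (Fin n) F2) (i : Fin n) :
    extM B i.succ = Fin.cons 0 (B i) := rfl

lemma extM_orth {n : ℕ} (B : Matrix (Fin n) (Fin n) F2) (hB : B * Bᵀ = 1) :
    extM B * (extM B)ᵀ = 1 := by
  have hB' : ∀ i j, B i ⬝ᵥ B j = (1 : Matrix (Fin n) (Fin n) F2) i j := by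
    intro i j; rw [← rowdot, hB]
  ext i j
  rw [rowdot]
  refine Fin.cases ?_ (fun i' => ?_) i <;> refine Fin.cases ?_ (fun j' => ?_) j
  · simp [extM_zero, cons_dot_cons]
  · rw [extM_zero, extM_succ, cons_dot_cons, Matrix.one_apply_ne (Fin.succ_ne_zero j').symm]
    simp
  · rw [extM_zero, extM_succ, cons_dot_cons, Matrix.one_apply_ne (Fin.succ_ne_zero i')]
    simp
  · rw [extM_succ, extM_succ, cons_dot_cons, zero_mul, zero_add, hB']
    simp [Matrix.one_apply, Fin.succ_inj]

lemma col0 {n : ℕ} {A : Matrix (Fin (n+1)) (Fin (n+1)) F2} (hA : A * Aᵀ = 1)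
    (h0 : A 0 = Pi.single 0 1) (i : Fin n) : A i.succ 0 = 0 := by
  have h := rowdot A A i.succ 0
  rw [hA, h0, dotProduct_single, mul_one, Matrix.one_apply_ne (Fin.succ_ne_zero i)] at h
  exact h.symm

lemma sub_orth {n : ℕ} {A : Matrix (Fin (n+1)) (Fin (n+1)) F2} (hA : A * Aᵀ = 1)
    (h0 : A 0 = Pi.single 0 1) :
    (A.submatrix Fin.succ Fin.succ) * (A.submatrix Fin.succ Fin.succ)ᵀ = 1 := by
  ext i j
  rw [rowdot]
  have h := rowdot A A i.succ j.succ
  rw [hA, dotProduct, Fin.sum_univ_succ, col0 hA h0 i, zero_mul, zero_add] at h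
  have h1 : (1 : Matrix (Fin (n+1)) (Fin (n+1)) F2) i.succ j.succ
      = (1 : Matrix (Fin n) (Fin n) F2) i j := by
    simp [Matrix.one_apply, Fin.succ_inj]
  rw [h1] at h
  simpa [dotProduct, Matrix.submatrix_apply] using h.symm

lemma recon {n : ℕ} {A : Matrix (Fin (n+1)) (Fin (n+1)) F2} (hA : A * Aᵀ = 1)
    (h0 : A 0 = Pi.single 0 1) : extM (A.submatrix Fin.succ Fin.succ) = A := by
  ext i j
  refine Fin.cases ?_ (fun i' => ?_) i
  · rw [extM_zero, h0, e1_eq_cons]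
  · refine Fin.cases ?_ (fun j' => ?_) j
    · rw [extM_succ, Fin.cons_zero, col0 hA h0 i']
    · rw [extM_succ, Fin.cons_succ]
      rfl

lemma fiber_e1 {n : ℕ} :
    (univ.filter (fun A : Matrix (Fin (n+1)) (Fin (n+1)) F2 =>
        A * Aᵀ = 1 ∧ A 0 = Pi.single 0 1)).card
      = (univ.filter (fun B : Matrix (Fin n) (Fin n) F2 => B * Bᵀ = 1)).card := by
  apply Finset.card_nbij' (fun A => A.submatrix Fin.succ Fin.succ) (fun B => extM B)
  · intro A hA
    simp only [Finset.mem_coe, Finset.mem_filter, Finset.mem_univ, true_and] at hA ⊢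
    exact sub_orth hA.1 hA.2
  · intro B hB
    simp only [Finset.mem_coe, Finset.mem_filter, Finset.mem_univ, true_and] at hB ⊢
    exact ⟨extM_orth B hB, by rw [extM_zero, e1_eq_cons]⟩
  · intro A hA
    simp only [Finset.mem_coe, Finset.mem_filter, Finset.mem_univ, true_and] at hA
    exact recon hA.1 hA.2
  · intro B _
    ext i j
    dsimp only
    rw [Matrix.submatrix_apply, extM_succ, Fin.cons_succ]

lemma row_mul {n : ℕ} (A B : Matrix (Fin n) (Fin n) F2) (i : Fin n) :
    (A * B) i = Bᵀ *ᵥ (A i) := by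
  ext j
  simp [Matrix.mul_apply, mulVec, dotProduct, transpose_apply, mul_comm]

lemma orth_mul' {m : ℕ} {A B : Matrix (Fin m) (Fin m) F2} (hA : A * Aᵀ = 1) (hB : B * Bᵀ = 1) :
    (A * B) * (A * B)ᵀ = 1 := by
  rw [transpose_mul, Matrix.mul_assoc, ← Matrix.mul_assoc B, hB, Matrix.one_mul, hA]

lemma fiber_card_eq {n : ℕ} (v : Fin (n+1) → F2) (M : Matrix (Fin (n+1)) (Fin (n+1)) F2)
    (hM : M * Mᵀ = 1) (hMv : M *ᵥ Pi.single 0 1 = v) :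
    (univ.filter (fun A : Matrix (Fin (n+1)) (Fin (n+1)) F2 => A * Aᵀ = 1 ∧ A 0 = v)).card
      = (univ.filter (fun A : Matrix (Fin (n+1)) (Fin (n+1)) F2 =>
          A * Aᵀ = 1 ∧ A 0 = Pi.single 0 1)).card := by
  have hMt : Mᵀ * M = 1 := _root_.mul_eq_one_comm.mp hM
  have hMt' : Mᵀ * Mᵀᵀ = 1 := by rw [transpose_transpose]; exact hMt
  apply Finset.card_nbij' (fun A => A * M) (fun B => B * Mᵀ)
  · intro A hA
    simp only [Finset.mem_coe, Finset.mem_filter, Finset.mem_univ, true_and] at hA ⊢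
    refine ⟨orth_mul' hA.1 hM, ?_⟩
    rw [row_mul, hA.2, ← hMv, Matrix.mulVec_mulVec, hMt, Matrix.one_mulVec]
  · intro B hB
    simp only [Finset.mem_coe, Finset.mem_filter, Finset.mem_univ, true_and] at hB ⊢
    refine ⟨orth_mul' hB.1 hMt', ?_⟩
    rw [row_mul, hB.2, transpose_transpose, hMv]
  · intro A _
    dsimp only
    rw [Matrix.mul_assoc, hM, Matrix.mul_one]
  · intro B _
    dsimp only
    rw [Matrix.mul_assoc, hMt, Matrix.mul_one]

def orthCard (m : ℕ) : ℕ :=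
  (univ.filter (fun A : Matrix (Fin m) (Fin m) F2 => A * Aᵀ = 1)).card

def S (n : ℕ) : Finset (Fin (n+1) → F2) :=
  univ.filter (fun v => v ⬝ᵥ v = 1 ∧ ((v ≠ fun _ => 1) ∨ v = Pi.single 0 1))

lemma dot_self' {m : ℕ} (x : Fin m → F2) : x ⬝ᵥ x = ∑ i, x i := by
  have : ∀ a : F2, a * a = a := by decide
  simp [dotProduct, this]

lemma mem_S {n : ℕ} (A : Matrix (Fin (n+1)) (Fin (n+1)) F2) (hA : A * Aᵀ = 1) :
    A 0 ∈ S n := by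
  simp only [S, Finset.mem_filter, Finset.mem_univ, true_and]
  have hdot : A 0 ⬝ᵥ A 0 = 1 := by
    have h := rowdot A A 0 0
    rw [hA, Matrix.one_apply_eq] at h
    exact h.symm
  refine ⟨hdot, ?_⟩
  cases n with
  | zero =>
    right
    revert hA
    revert A
    decide
  | succ n' =>
    left
    intro he
    have i1 : Fin (n'+2) := ⟨1, by omega⟩
    have h1 : (⟨1, by omega⟩ : Fin (n'+2)) ≠ 0 := by simp [Fin.ext_iff]
    have ha := rowdot A A ⟨1, by omega⟩ 0
    rw [hA, Matrix.one_apply_ne h1, he] at ha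
    have hb := rowdot A A ⟨1, by omega⟩ ⟨1, by omega⟩
    rw [hA, Matrix.one_apply_eq] at hb
    have hc : A ⟨1, by omega⟩ ⬝ᵥ (fun _ => 1) = A ⟨1, by omega⟩ ⬝ᵥ A ⟨1, by omega⟩ := by
      rw [dot_self']
      simp [dotProduct]
    rw [hc, ← hb] at ha
    exact one_ne_zero ha.symm

lemma step (n : ℕ) : orthCard (n+1) = (S n).card * orthCard n := by
  rw [orthCard, Finset.card_eq_sum_card_fiberwise (fun A hA => mem_S A (by simpa using hA))]
  have hconst : ∀ v ∈ S n,
      ((univ.filter (fun A : Matrix (Fin (n+1)) (Fin (n+1)) F2 => A * Aᵀ = 1)).filter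
        (fun A => A 0 = v)).card = orthCard n := by
    intro v hv
    rw [Finset.filter_filter]
    simp only [S, Finset.mem_filter, Finset.mem_univ, true_and] at hv
    obtain ⟨M, hM, hMv⟩ := exists_orth_mulVec v hv.1 hv.2
    rw [fiber_card_eq v M hM hMv, fiber_e1, orthCard]
  rw [Finset.sum_congr rfl hconst, Finset.sum_const, smul_eq_mul]

lemma count1 (m : ℕ) :
    (univ.filter (fun v : Fin (m+1) → F2 => ∑ i, v i = 1)).card = 2 ^ m := by
  have hsum : ∀ v : Fin (m+1) → F2,
      ∑ i, Function.update v 0 (v 0 + 1) i = (∑ i, v i) + 1 := by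
    intro v
    rw [Finset.sum_update_of_mem (Finset.mem_univ 0)]
    have h2 : ∑ i, v i = v 0 + ∑ i ∈ univ \ {0}, v i := by
      rw [Finset.sdiff_singleton_eq_erase, Finset.add_sum_erase _ _ (Finset.mem_univ 0)]
    rw [h2]
    ring
  have hinv : ∀ v : Fin (m+1) → F2,
      Function.update (Function.update v 0 (v 0 + 1)) 0 (Function.update v 0 (v 0 + 1) 0 + 1)
        = v := by
    intro v
    rw [Function.update_self, Function.update_idem, add_assoc, f2_add_self, add_zero,
      Function.update_eq_self]
  have key : (univ.filter (fun v : Fin (m+1) → F2 => ∑ i, v i = 1)).card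
      = (univ.filter (fun v : Fin (m+1) → F2 => ¬ (∑ i, v i = 1))).card := by
    apply Finset.card_nbij' (fun v => Function.update v 0 (v 0 + 1))
      (fun v => Function.update v 0 (v 0 + 1))
    · intro v hv
      simp only [Finset.mem_coe, Finset.mem_filter, Finset.mem_univ, true_and] at hv ⊢
      rw [hsum, hv]
      decide
    · intro v hv
      simp only [Finset.mem_coe, Finset.mem_filter, Finset.mem_univ, true_and] at hv ⊢
      rw [hsum, f2_eq_zero_of_ne_one hv, zero_add]
    · intro v _; exact hinv v
    · intro v _; exact hinv v
  have total := Finset.card_filter_add_card_filter_not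
    (s := (univ : Finset (Fin (m+1) → F2))) (fun v => ∑ i, v i = 1)
  rw [Finset.card_univ] at total
  have hcard : Fintype.card (Fin (m+1) → F2) = 2 ^ (m+1) := by
    rw [Fintype.card_fun]
    simp
  rw [hcard, ← key] at total
  have h2 : 2 ^ (m+1) = 2 ^ m + 2 ^ m := by ring
  rw [h2, ← two_mul, ← two_mul] at total
  exact Nat.eq_of_mul_eq_mul_left two_pos total

lemma cast_two_mul_eq_zero (j : ℕ) : ((2*j : ℕ) : F2) = 0 := by
  push_cast
  have h2 : (2 : F2) = 0 := by decide
  rw [h2, zero_mul]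

lemma sum_const_one_even (j : ℕ) : ∑ _i : Fin (2*j+2), (1:F2) = 0 := by
  rw [Finset.sum_const, Finset.card_univ, Fintype.card_fin, nsmul_eq_mul, mul_one]
  have : (2*j+2 : ℕ) = 2*(j+1) := by ring
  rw [this, cast_two_mul_eq_zero]

lemma sum_const_one_odd (j : ℕ) : ∑ _i : Fin (2*j+3), (1:F2) = 1 := by
  rw [Finset.sum_const, Finset.card_univ, Fintype.card_fin, nsmul_eq_mul, mul_one]
  have : ((2*j+3 : ℕ) : F2) = ((2*(j+1) : ℕ) : F2) + ((1:ℕ) : F2) := by push_cast; ring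
  rw [this, cast_two_mul_eq_zero, zero_add, Nat.cast_one]

lemma S_even (j : ℕ) : (S (2*j+1)).card = 2^(2*j+1) := by
  have hS : S (2*j+1) = univ.filter (fun v : Fin (2*j+2) → F2 => ∑ i, v i = 1) := by
    ext v
    simp only [S, Finset.mem_filter, Finset.mem_univ, true_and, dot_self']
    constructor
    · exact fun h => h.1
    · intro h
      refine ⟨h, Or.inl (fun hc => ?_)⟩
      rw [hc, sum_const_one_even] at h
      exact one_ne_zero h.symm
  rw [hS, count1]

lemma S_odd (j : ℕ) : (S (2*j+2)).card = 2^(2*j+2) - 1 := by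
  have he1ne : (Pi.single 0 1 : Fin (2*j+3) → F2) ≠ (fun _ => 1) := by
    intro h
    have h1 : (⟨1, by omega⟩ : Fin (2*j+3)) ≠ 0 := by simp [Fin.ext_iff]
    have := congrFun h ⟨1, by omega⟩
    rw [Pi.single_eq_of_ne h1] at this
    exact one_ne_zero this.symm
  have hS : S (2*j+2) = (univ.filter (fun v : Fin (2*j+3) → F2 => ∑ i, v i = 1)).erase
      (fun _ => 1) := by
    ext v
    simp only [S, Finset.mem_filter, Finset.mem_univ, true_and, dot_self', Finset.mem_erase]
    constructor
    · rintro ⟨h1, h2 | h2⟩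
      · exact ⟨h2, h1⟩
      · exact ⟨h2 ▸ he1ne, h1⟩
    · rintro ⟨h1, h2⟩
      exact ⟨h2, Or.inl h1⟩
  have hmem : (fun _ => 1 : Fin (2*j+3) → F2) ∈
      univ.filter (fun v : Fin (2*j+3) → F2 => ∑ i, v i = 1) := by
    simp only [Finset.mem_filter, Finset.mem_univ, true_and]
    exact sum_const_one_odd j
  rw [hS, Finset.card_erase_of_mem hmem, count1]

lemma orthCard_zero : orthCard 0 = 1 := by decide

lemma S_zero_card : (S 0).card = 1 := by decide

lemma main_count : ∀ k : ℕ, orthCard (2*k) = 2^(k^2) * ∏ i ∈ Finset.Icc 1 (k-1), (2^(2*i) - 1) := by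
  intro k
  induction k with
  | zero =>
    rw [Nat.mul_zero, orthCard_zero]
    simp
  | succ k ih =>
    have h1 : 2*(k+1) = (2*k+1)+1 := by ring
    rw [h1, step, show 2*k+1 = (2*k)+1 from rfl, step, S_even, ih]
    cases k with
    | zero =>
      rw [S_zero_card]
      norm_num
    | succ j =>
      rw [show 2*(j+1) = 2*j+2 from by ring, S_odd]
      have hprod : ∏ i ∈ Finset.Icc 1 (j+1+1-1), (2^(2*i) - 1)
          = (∏ i ∈ Finset.Icc 1 (j+1-1), (2^(2*i) - 1)) * (2^(2*(j+1)) - 1) := by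
        rw [show j+1+1-1 = j+1 from rfl, show j+1-1 = j from rfl]
        exact Finset.prod_Icc_succ_top (by omega) _
      rw [hprod, show 2*(j+1) = 2*j+2 from by ring]
      have hpow : (j+1+1)^2 = (2*(j+1)+1) + (j+1)^2 := by ring
      rw [hpow, pow_add]
      ring

theorem orthogonal_group_card_even (k : ℕ) :
    (Finset.univ.filter
        (fun A : Matrix (Fin (2 * k)) (Fin (2 * k)) (ZMod 2) =>
          IsUnit A ∧ A * A.transpose = 1)).card =
      2 ^ (k ^ 2) * ∏ i ∈ Finset.Icc 1 (k - 1), (2 ^ (2 * i) - 1) := by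
  have hfe : (Finset.univ.filter
        (fun A : Matrix (Fin (2 * k)) (Fin (2 * k)) (ZMod 2) =>
          IsUnit A ∧ A * A.transpose = 1))
      = (Finset.univ.filter
        (fun A : Matrix (Fin (2 * k)) (Fin (2 * k)) (ZMod 2) => A * Aᵀ = 1)) := by
    apply Finset.filter_congr
    intro A _
    constructor
    · exact fun h => h.2
    · intro h
      exact ⟨isUnit_iff_exists.mpr ⟨Aᵀ, h, _root_.mul_eq_one_comm.mp h⟩, h⟩
  rw [hfe]
  exact main_count k
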